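/- Let 𝒜 be a complex unital Banach algebra and M, N, C ∈ 𝒜 with ‖M‖·‖N‖ < 1, and let X := ∑_{j=0}^{∞} (−1)^{j+1} M^j · C · N^j (a convergent series). Then for every k ∈ ℕ the partial sum Y_k := ∑_{j=0}^{k} (−1)^{j+1} M^j · C · N^j satisfies X − Y_k = (−1)^{k+1} M^{k+1} · X · N^{k+1}, and in particular ‖X − Y_k‖ ≤ (‖M‖·‖N‖)^{k+1} · ‖X‖. -/

import Mathlib

private lemma norm_pow_le_one_mul {𝒜 : Type*} [NormedRing 𝒜] (a : 𝒜) :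
    ∀ n : ℕ, ‖a ^ n‖ ≤ ‖(1 : 𝒜)‖ * ‖a‖ ^ n := by
  intro n
  induction n with
  | zero => simp
  | succ n ih =>
    calc ‖a ^ (n + 1)‖ = ‖a ^ n * a‖ := by rw [pow_succ]
      _ ≤ ‖a ^ n‖ * ‖a‖ := norm_mul_le _ _
      _ ≤ (‖(1 : 𝒜)‖ * ‖a‖ ^ n) * ‖a‖ := by
          exact mul_le_mul_of_nonneg_right ih (norm_nonneg a)
      _ = ‖(1 : 𝒜)‖ * ‖a‖ ^ (n + 1) := by ring

/-- Geometric convergence of the fixed-point iteration for the Stein equation: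
for `X = ∑_{j≥0} (-1)^{j+1} Mʲ C Nʲ` (convergent since `‖M‖·‖N‖ < 1`) and the
partial sum `Y_k = ∑_{j=0}^{k} (-1)^{j+1} Mʲ C Nʲ`, one has
`X - Y_k = (-1)^{k+1} M^{k+1} X N^{k+1}` and
`‖X - Y_k‖ ≤ (‖M‖·‖N‖)^{k+1} ‖X‖`. -/
theorem stmt_12 {𝒜 : Type*} [NormedRing 𝒜] [NormedAlgebra ℂ 𝒜] [CompleteSpace 𝒜]
    (M N C : 𝒜) (h : ‖M‖ * ‖N‖ < 1) (k : ℕ) :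
    ∀ X : 𝒜, X = ∑' j : ℕ, (-1 : 𝒜) ^ (j + 1) * (M ^ j * C * N ^ j) →
      X - (∑ j ∈ Finset.range (k + 1), (-1 : 𝒜) ^ (j + 1) * (M ^ j * C * N ^ j)) =
          (-1 : 𝒜) ^ (k + 1) * (M ^ (k + 1) * X * N ^ (k + 1)) ∧
        ‖X - ∑ j ∈ Finset.range (k + 1), (-1 : 𝒜) ^ (j + 1) * (M ^ j * C * N ^ j)‖ ≤
          (‖M‖ * ‖N‖) ^ (k + 1) * ‖X‖ := by
  intro X hX
  set f : ℕ → 𝒜 := fun j => (-1 : 𝒜) ^ (j + 1) * (M ^ j * C * N ^ j) with hf_def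
  have hMN0 : (0 : ℝ) ≤ ‖M‖ * ‖N‖ := mul_nonneg (norm_nonneg _) (norm_nonneg _)
  -- summability of f
  have hbound : ∀ j, ‖f j‖ ≤
      (‖(1 : 𝒜)‖ * (‖(1 : 𝒜)‖ * ‖C‖ * ‖(1 : 𝒜)‖)) * (‖M‖ * ‖N‖) ^ j := by
    intro j
    have hsign : ‖(-1 : 𝒜) ^ (j + 1)‖ = ‖(1 : 𝒜)‖ := by
      rcases Nat.even_or_odd (j + 1) with he | ho
      · rw [he.neg_one_pow]
      · rw [ho.neg_one_pow, norm_neg]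
    calc ‖f j‖ ≤ ‖(-1 : 𝒜) ^ (j + 1)‖ * ‖M ^ j * C * N ^ j‖ := norm_mul_le _ _
      _ ≤ ‖(1 : 𝒜)‖ * (‖M ^ j‖ * ‖C‖ * ‖N ^ j‖) := by
          rw [hsign]
          refine mul_le_mul_of_nonneg_left ?_ (norm_nonneg _)
          exact (norm_mul_le _ _).trans
            (mul_le_mul_of_nonneg_right (norm_mul_le _ _) (norm_nonneg _))
      _ ≤ ‖(1 : 𝒜)‖ * ((‖(1 : 𝒜)‖ * ‖M‖ ^ j) * ‖C‖ * (‖(1 : 𝒜)‖ * ‖N‖ ^ j)) := by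
          refine mul_le_mul_of_nonneg_left ?_ (norm_nonneg _)
          refine mul_le_mul ?_ (norm_pow_le_one_mul N j) (norm_nonneg _) ?_
          · exact mul_le_mul_of_nonneg_right (norm_pow_le_one_mul M j) (norm_nonneg _)
          · positivity
      _ = (‖(1 : 𝒜)‖ * (‖(1 : 𝒜)‖ * ‖C‖ * ‖(1 : 𝒜)‖)) * (‖M‖ * ‖N‖) ^ j := by
          rw [mul_pow]; ring
  have hf : Summable f :=
    Summable.of_norm_bounded ((summable_geometric_of_lt_one hMN0 h).mul_left _) hbound
  -- tail formula
  have htail : X - (∑ j ∈ Finset.range (k + 1), f j) = ∑' j : ℕ, f (j + (k + 1)) := by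
    rw [hX, ← Summable.sum_add_tsum_nat_add (k + 1) hf]
    exact add_sub_cancel_left _ _
  -- commuting signs
  have hc : ∀ (n : ℕ) (a : 𝒜), a * (-1 : 𝒜) ^ n = (-1 : 𝒜) ^ n * a :=
    fun n a => ((Commute.neg_one_left a).pow_left n).eq.symm
  -- termwise identity
  have hterm : ∀ j : ℕ, f (j + (k + 1)) =
      (-1 : 𝒜) ^ (k + 1) * (M ^ (k + 1) * f j * N ^ (k + 1)) := by
    intro j
    simp only [hf_def]
    have h1 : M ^ (k + 1) * ((-1 : 𝒜) ^ (j + 1) * (M ^ j * C * N ^ j)) =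
        (-1 : 𝒜) ^ (j + 1) * (M ^ (k + 1) * (M ^ j * C * N ^ j)) := by
      rw [← mul_assoc, hc, mul_assoc]
    rw [h1]
    have h2 : (j + (k + 1)) + 1 = (k + 1) + (j + 1) := by ring
    rw [h2, pow_add (-1 : 𝒜),
      show M ^ (j + (k + 1)) = M ^ (k + 1) * M ^ j from by rw [← pow_add, add_comm],
      pow_add N]
    simp only [mul_assoc]
  -- the key equation
  have heq : X - (∑ j ∈ Finset.range (k + 1), f j) =
      (-1 : 𝒜) ^ (k + 1) * (M ^ (k + 1) * X * N ^ (k + 1)) := by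
    rw [htail]
    calc ∑' j : ℕ, f (j + (k + 1))
        = ∑' j : ℕ, (-1 : 𝒜) ^ (k + 1) * (M ^ (k + 1) * f j * N ^ (k + 1)) := by
          exact tsum_congr hterm
      _ = (-1 : 𝒜) ^ (k + 1) * ∑' j : ℕ, M ^ (k + 1) * f j * N ^ (k + 1) :=
          Summable.tsum_mul_left _ (((hf.mul_left _).mul_right _))
      _ = (-1 : 𝒜) ^ (k + 1) * ((∑' j : ℕ, M ^ (k + 1) * f j) * N ^ (k + 1)) := by
          rw [Summable.tsum_mul_right _ (hf.mul_left _)]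
      _ = (-1 : 𝒜) ^ (k + 1) * (M ^ (k + 1) * X * N ^ (k + 1)) := by
          rw [Summable.tsum_mul_left _ hf, hX]
  refine ⟨heq, ?_⟩
  rw [heq]
  have hnorm : ‖(-1 : 𝒜) ^ (k + 1) * (M ^ (k + 1) * X * N ^ (k + 1))‖ =
      ‖M ^ (k + 1) * X * N ^ (k + 1)‖ := by
    rcases Nat.even_or_odd (k + 1) with he | ho
    · rw [he.neg_one_pow, one_mul]
    · rw [ho.neg_one_pow, neg_one_mul, norm_neg]
  rw [hnorm]
  calc ‖M ^ (k + 1) * X * N ^ (k + 1)‖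
      ≤ ‖M ^ (k + 1)‖ * ‖X‖ * ‖N ^ (k + 1)‖ :=
        (norm_mul_le _ _).trans
          (mul_le_mul_of_nonneg_right (norm_mul_le _ _) (norm_nonneg _))
    _ ≤ ‖M‖ ^ (k + 1) * ‖X‖ * ‖N‖ ^ (k + 1) := by
        refine mul_le_mul (mul_le_mul_of_nonneg_right
          (norm_pow_le' M (Nat.succ_pos k)) (norm_nonneg _))
          (norm_pow_le' N (Nat.succ_pos k)) (norm_nonneg _) ?_
        positivity
    _ = (‖M‖ * ‖N‖) ^ (k + 1) * ‖X‖ := by rw [mul_pow]; ring
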